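/- Let A = √(8/3). Suppose ρ₁, u₁⁽¹⁾, θ₁, φ₁, ρ₂, u₁⁽²⁾, θ₂, φ₂, ρ₃, u₁⁽³⁾, θ₃, φ₃, h₁¹ are smooth real-valued functions of (t,x) ∈ ℝ×ℝ satisfying at every point: u₁⁽¹⁾ = Aρ₁, θ₁ = (2/3)ρ₁, φ₁ = ρ₁; u₁⁽²⁾ = Aρ₂ + h₁¹ with ∂ₓh₁¹ = −[∂ₜρ₁ + ∂ₓ(ρ₁u₁⁽¹⁾)]; θ₂ = (2/3)ρ₂ − (1/9)ρ₁²; φ₂ = ρ₂ + ∂ₓ²ρ₁ − (1/2)ρ₁²; the equation ∂ₜu₁⁽¹⁾ − A∂ₓu₁⁽²⁾ − Aρ₁∂ₓu₁⁽¹⁾ + u₁⁽¹⁾∂ₓu₁⁽¹⁾ + ∂ₓθ₂ + ∂ₓρ₂ + ∂ₓ(ρ₁θ₁) + ∂ₓφ₂ + ρ₁∂ₓφ₁ = 0; the equation ∂ₜρ₂ − A∂ₓρ₃ + ∂ₓu₁⁽³⁾ + ∂ₓ(ρ₁u₁⁽²⁾) + ∂ₓ(ρ₂u₁⁽¹⁾)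 = 0; the equation ∂ₜu₁⁽²⁾ + ρ₁∂ₜu₁⁽¹⁾ − A∂ₓu₁⁽³⁾ − Aρ₁∂ₓu₁⁽²⁾ − Aρ₂∂ₓu₁⁽¹⁾ + ∂ₓ(u₁⁽¹⁾u₁⁽²⁾) + ρ₁u₁⁽¹⁾∂ₓu₁⁽¹⁾ + ∂ₓθ₃ + ∂ₓρ₃ + ∂ₓ(ρ₁θ₂) + ∂ₓ(ρ₂θ₁) + ∂ₓφ₃ + ρ₂∂ₓφ₁ + ρ₁∂ₓφ₂ = 0; and the equation ∂ₓ²φ₂ − φ₃ − φ₁φ₂ − (1/6)φ₁³ + ρ₃ = 0. Then at every point 2A∂ₜρ₂ − (2/3)∂ₓρ₃ + ∂ₓθ₃ + (20/3)∂ₓ(ρ₁ρ₂) + ∂ₓ³ρ₂ = h₂¹, where h₂¹ := −Aρ₁²∂ₓu₁⁽¹⁾ + ρ₁∂ₓ(ρ₁θ₁) + ρ₁²∂ₓφ₁ + ∂ₓ((1/6)φ₁³) − ∂ₜh₁¹ − 2A∂ₓ(ρ₁h₁¹) + (1/9)ρ₁²∂ₓρ₁ − ∂ₓ³(∂ₓ²ρ₁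 − (1/2)ρ₁²) + ∂ₓ(ρ₁∂ₓ²ρ₁) − ∂ₓ((1/2)ρ₁³). -/

import Mathlib

/-- Partial derivative in `t` of a function of `(t, x) : ℝ × ℝ`. -/
noncomputable def pdt (f : ℝ × ℝ → ℝ) (p : ℝ × ℝ) : ℝ :=
  deriv (fun s => f (s, p.2)) p.1

/-- Partial derivative in `x` of a function of `(t, x) : ℝ × ℝ`. -/
noncomputable def pdx (f : ℝ × ℝ → ℝ) (p : ℝ × ℝ) : ℝ :=
  deriv (fun y => f (p.1, y)) p.2

section Helpers

variable {f g : ℝ × ℝ → ℝ} {p : ℝ × ℝ} {c : ℝ}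

lemma sliceX_diff (hf : ContDiff ℝ (⊤ : ℕ∞) f) (a b : ℝ) :
    DifferentiableAt ℝ (fun y => f (a, y)) b :=
  (hf.differentiable (by simp) (a, b)).comp b
    ((differentiableAt_const a).prodMk differentiableAt_id)

lemma sliceT_diff (hf : ContDiff ℝ (⊤ : ℕ∞) f) (a b : ℝ) :
    DifferentiableAt ℝ (fun s => f (s, b)) a :=
  (hf.differentiable (by simp) (a, b)).comp a
    (differentiableAt_id.prodMk (differentiableAt_const b))

lemma pdx_congr (h : ∀ q, f q = g q) (p : ℝ × ℝ) : pdx f p = pdx g p := by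
  rw [show f = g from funext h]

lemma pdx_add (hf : ContDiff ℝ (⊤ : ℕ∞) f) (hg : ContDiff ℝ (⊤ : ℕ∞) g) (p : ℝ × ℝ) :
    pdx (fun q => f q + g q) p = pdx f p + pdx g p :=
  deriv_add (sliceX_diff hf _ _) (sliceX_diff hg _ _)

lemma pdx_sub (hf : ContDiff ℝ (⊤ : ℕ∞) f) (hg : ContDiff ℝ (⊤ : ℕ∞) g) (p : ℝ × ℝ) :
    pdx (fun q => f q - g q) p = pdx f p - pdx g p :=
  deriv_sub (sliceX_diff hf _ _) (sliceX_diff hg _ _)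

lemma pdx_mul (hf : ContDiff ℝ (⊤ : ℕ∞) f) (hg : ContDiff ℝ (⊤ : ℕ∞) g) (p : ℝ × ℝ) :
    pdx (fun q => f q * g q) p = pdx f p * g p + f p * pdx g p :=
  deriv_mul (sliceX_diff hf _ _) (sliceX_diff hg _ _)

lemma pdx_const_mul (hf : ContDiff ℝ (⊤ : ℕ∞) f) (c : ℝ) (p : ℝ × ℝ) :
    pdx (fun q => c * f q) p = c * pdx f p :=
  deriv_const_mul c (sliceX_diff hf _ _)

lemma pdx_sq (hf : ContDiff ℝ (⊤ : ℕ∞) f) (p : ℝ × ℝ) :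
    pdx (fun q => (f q) ^ 2) p = 2 * f p * pdx f p := by
  rw [pdx_congr (g := fun q => f q * f q) (fun q => by ring), pdx_mul hf hf]
  ring

lemma pdx_cube (hf : ContDiff ℝ (⊤ : ℕ∞) f) (p : ℝ × ℝ) :
    pdx (fun q => (f q) ^ 3) p = 3 * (f p) ^ 2 * pdx f p := by
  rw [pdx_congr (g := fun q => f q * (f q * f q)) (fun q => by ring),
    pdx_mul hf (hf.mul hf), pdx_mul hf hf]
  ring

lemma pdt_congr (h : ∀ q, f q = g q) (p : ℝ × ℝ) : pdt f p = pdt g p := by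
  rw [show f = g from funext h]

lemma pdt_add (hf : ContDiff ℝ (⊤ : ℕ∞) f) (hg : ContDiff ℝ (⊤ : ℕ∞) g) (p : ℝ × ℝ) :
    pdt (fun q => f q + g q) p = pdt f p + pdt g p :=
  deriv_add (sliceT_diff hf _ _) (sliceT_diff hg _ _)

lemma pdt_const_mul (hf : ContDiff ℝ (⊤ : ℕ∞) f) (c : ℝ) (p : ℝ × ℝ) :
    pdt (fun q => c * f q) p = c * pdt f p :=
  deriv_const_mul c (sliceT_diff hf _ _)

lemma pdx_eq_fderiv (hf : ContDiff ℝ (⊤ : ℕ∞) f) (p : ℝ × ℝ) :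
    pdx f p = fderiv ℝ f p (0, 1) := by
  have hL : HasFDerivAt (fun y : ℝ => (p.1, y))
      ((0 : ℝ →L[ℝ] ℝ).prod (ContinuousLinearMap.id ℝ ℝ)) p.2 :=
    (hasFDerivAt_const p.1 p.2).prodMk (hasFDerivAt_id p.2)
  have h2 : HasFDerivAt (fun y : ℝ => f (p.1, y))
      ((fderiv ℝ f p).comp ((0 : ℝ →L[ℝ] ℝ).prod (ContinuousLinearMap.id ℝ ℝ))) p.2 := by
    have := ((hf.differentiable (by simp) p).hasFDerivAt).comp p.2 (by simpa using hL)
    exact this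
  have := h2.hasDerivAt.deriv
  simpa [pdx] using this

lemma contDiff_pdx (hf : ContDiff ℝ (⊤ : ℕ∞) f) : ContDiff ℝ (⊤ : ℕ∞) (pdx f) := by
  have h : pdx f = fun p => fderiv ℝ f p (0, 1) := funext (pdx_eq_fderiv hf)
  rw [h]
  exact (hf.fderiv_right (by simp)).clm_apply contDiff_const

lemma pdx_zero_fun (p : ℝ × ℝ) : pdx (fun _ => (0 : ℝ)) p = 0 := by
  simp [pdx]

end Helpers

/-- the identity
`2A∂ₜρ₂ − (2/3)∂ₓρ₃ + ∂ₓθ₃ + (20/3)∂ₓ(ρ₁ρ₂) + ∂ₓ³ρ₂ = h₂¹`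
obtained from the third-order momentum, mass and Poisson equations. -/
theorem third_order_momentum_combination
    (A : ℝ) (hA : A = Real.sqrt (8 / 3))
    (ρ₁ u₁ θ₁ φ₁ ρ₂ u₂ θ₂ φ₂ ρ₃ u₃ θ₃ φ₃ h₁ : ℝ × ℝ → ℝ)
    (hρ₁ : ContDiff ℝ (⊤ : ℕ∞) ρ₁) (hu₁ : ContDiff ℝ (⊤ : ℕ∞) u₁)
    (hθ₁ : ContDiff ℝ (⊤ : ℕ∞) θ₁) (hφ₁ : ContDiff ℝ (⊤ : ℕ∞) φ₁)
    (hρ₂ : ContDiff ℝ (⊤ : ℕ∞) ρ₂) (hu₂ : ContDiff ℝ (⊤ : ℕ∞) u₂)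
    (hθ₂ : ContDiff ℝ (⊤ : ℕ∞) θ₂) (hφ₂ : ContDiff ℝ (⊤ : ℕ∞) φ₂)
    (hρ₃ : ContDiff ℝ (⊤ : ℕ∞) ρ₃) (hu₃ : ContDiff ℝ (⊤ : ℕ∞) u₃)
    (hθ₃ : ContDiff ℝ (⊤ : ℕ∞) θ₃) (hφ₃ : ContDiff ℝ (⊤ : ℕ∞) φ₃)
    (hh₁ : ContDiff ℝ (⊤ : ℕ∞) h₁)
    (rel_u₁ : ∀ p, u₁ p = A * ρ₁ p)
    (rel_θ₁ : ∀ p, θ₁ p = (2 / 3) * ρ₁ p)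
    (rel_φ₁ : ∀ p, φ₁ p = ρ₁ p)
    (rel_u₂ : ∀ p, u₂ p = A * ρ₂ p + h₁ p)
    (rel_h₁ : ∀ p, pdx h₁ p = -(pdt ρ₁ p + pdx (fun q => ρ₁ q * u₁ q) p))
    (rel_θ₂ : ∀ p, θ₂ p = (2 / 3) * ρ₂ p - (1 / 9) * (ρ₁ p) ^ 2)
    (rel_φ₂ : ∀ p, φ₂ p = ρ₂ p + pdx (pdx ρ₁) p - (1 / 2) * (ρ₁ p) ^ 2)
    (eq2 : ∀ p, pdt u₁ p - A * pdx u₂ p - A * ρ₁ p * pdx u₁ p + u₁ p * pdx u₁ p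
      + pdx θ₂ p + pdx ρ₂ p + pdx (fun q => ρ₁ q * θ₁ q) p + pdx φ₂ p
      + ρ₁ p * pdx φ₁ p = 0)
    (eqa : ∀ p, pdt ρ₂ p - A * pdx ρ₃ p + pdx u₃ p
      + pdx (fun q => ρ₁ q * u₂ q) p + pdx (fun q => ρ₂ q * u₁ q) p = 0)
    (eqb : ∀ p, pdt u₂ p + ρ₁ p * pdt u₁ p - A * pdx u₃ p - A * ρ₁ p * pdx u₂ p
      - A * ρ₂ p * pdx u₁ p + pdx (fun q => u₁ q * u₂ q) p
      + ρ₁ p * u₁ p * pdx u₁ p + pdx θ₃ p + pdx ρ₃ p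
      + pdx (fun q => ρ₁ q * θ₂ q) p + pdx (fun q => ρ₂ q * θ₁ q) p
      + pdx φ₃ p + ρ₂ p * pdx φ₁ p + ρ₁ p * pdx φ₂ p = 0)
    (eqd : ∀ p, pdx (pdx φ₂) p - φ₃ p - φ₁ p * φ₂ p - (1 / 6) * (φ₁ p) ^ 3
      + ρ₃ p = 0) :
    ∀ p, 2 * A * pdt ρ₂ p - (2 / 3) * pdx ρ₃ p + pdx θ₃ p
        + (20 / 3) * pdx (fun q => ρ₁ q * ρ₂ q) p + pdx (pdx (pdx ρ₂)) p
      = -(A * (ρ₁ p) ^ 2 * pdx u₁ p) + ρ₁ p * pdx (fun q => ρ₁ q * θ₁ q) p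
          + (ρ₁ p) ^ 2 * pdx φ₁ p + pdx (fun q => (1 / 6) * (φ₁ q) ^ 3) p
          - pdt h₁ p - 2 * A * pdx (fun q => ρ₁ q * h₁ q) p
          + (1 / 9) * (ρ₁ p) ^ 2 * pdx ρ₁ p
          - pdx (pdx (pdx (fun q => pdx (pdx ρ₁) q - (1 / 2) * (ρ₁ q) ^ 2))) p
          + pdx (fun q => ρ₁ q * pdx (pdx ρ₁) q) p
          - pdx (fun q => (1 / 2) * (ρ₁ q) ^ 3) p := by
  intro p
  have hsq : A ^ 2 = 8 / 3 := by
    rw [hA]; exact Real.sq_sqrt (by norm_num)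
  -- smoothness of auxiliary functions
  have hsqρ₁ : ContDiff ℝ (⊤ : ℕ∞) (fun q => (ρ₁ q) ^ 2) := hρ₁.pow 2
  have hB : ContDiff ℝ (⊤ : ℕ∞) (pdx (pdx ρ₁)) := contDiff_pdx (contDiff_pdx hρ₁)
  have hG : ContDiff ℝ (⊤ : ℕ∞) (fun q => pdx (pdx ρ₁) q - (1 / 2) * (ρ₁ q) ^ 2) :=
    hB.sub (contDiff_const.mul hsqρ₁)
  -- basic expansions
  have e_u₁x : ∀ q, pdx u₁ q = A * pdx ρ₁ q := fun q =>
    (pdx_congr rel_u₁ q).trans (pdx_const_mul hρ₁ A q)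
  have e_u₁t : ∀ q, pdt u₁ q = A * pdt ρ₁ q := fun q =>
    (pdt_congr rel_u₁ q).trans (pdt_const_mul hρ₁ A q)
  have e_θ₁x : ∀ q, pdx θ₁ q = (2 / 3) * pdx ρ₁ q := fun q =>
    (pdx_congr rel_θ₁ q).trans (pdx_const_mul hρ₁ (2 / 3) q)
  have e_φ₁x : ∀ q, pdx φ₁ q = pdx ρ₁ q := fun q => pdx_congr rel_φ₁ q
  have e_u₂x : ∀ q, pdx u₂ q = A * pdx ρ₂ q + pdx h₁ q := fun q => by
    rw [pdx_congr rel_u₂ q, pdx_add (contDiff_const.mul hρ₂) hh₁ q,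
      pdx_const_mul hρ₂ A q]
  have e_u₂t : ∀ q, pdt u₂ q = A * pdt ρ₂ q + pdt h₁ q := fun q => by
    rw [pdt_congr rel_u₂ q, pdt_add (contDiff_const.mul hρ₂) hh₁ q,
      pdt_const_mul hρ₂ A q]
  have e_θ₂x : ∀ q, pdx θ₂ q = (2 / 3) * pdx ρ₂ q - (2 / 9) * (ρ₁ q * pdx ρ₁ q) := fun q => by
    rw [pdx_congr rel_θ₂ q, pdx_sub (contDiff_const.mul hρ₂) (contDiff_const.mul hsqρ₁) q,
      pdx_const_mul hρ₂ (2 / 3) q, pdx_const_mul hsqρ₁ (1 / 9) q, pdx_sq hρ₁ q]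
    ring
  have e_φ₂x : ∀ q, pdx φ₂ q = pdx ρ₂ q + pdx (pdx (pdx ρ₁)) q - ρ₁ q * pdx ρ₁ q := fun q => by
    rw [pdx_congr rel_φ₂ q, pdx_sub (hρ₂.add hB) (contDiff_const.mul hsqρ₁) q,
      pdx_add hρ₂ hB q, pdx_const_mul hsqρ₁ (1 / 2) q, pdx_sq hρ₁ q]
    ring
  -- triple x-derivative of φ₂ splits as ρ₂ part plus G part
  have st1 : ∀ q, pdx φ₂ q
      = pdx ρ₂ q + pdx (fun r => pdx (pdx ρ₁) r - (1 / 2) * (ρ₁ r) ^ 2) q := fun q => by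
    rw [pdx_congr rel_φ₂ q,
      pdx_congr (f := fun r => ρ₂ r + pdx (pdx ρ₁) r - (1 / 2) * (ρ₁ r) ^ 2)
        (g := fun r => ρ₂ r + (pdx (pdx ρ₁) r - (1 / 2) * (ρ₁ r) ^ 2)) (fun r => by ring) q,
      pdx_add hρ₂ hG q]
  have st2 : ∀ q, pdx (pdx φ₂) q
      = pdx (pdx ρ₂) q + pdx (pdx (fun r => pdx (pdx ρ₁) r - (1 / 2) * (ρ₁ r) ^ 2)) q := fun q => by
    rw [pdx_congr st1 q, pdx_add (contDiff_pdx hρ₂) (contDiff_pdx hG) q]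
  have st3 : pdx (pdx (pdx φ₂)) p
      = pdx (pdx (pdx ρ₂)) p
        + pdx (pdx (pdx (fun r => pdx (pdx ρ₁) r - (1 / 2) * (ρ₁ r) ^ 2))) p := by
    rw [pdx_congr st2 p,
      pdx_add (contDiff_pdx (contDiff_pdx hρ₂)) (contDiff_pdx (contDiff_pdx hG)) p]
  -- derivative of the Poisson equation
  have ED : pdx (fun q => pdx (pdx φ₂) q - φ₃ q - φ₁ q * φ₂ q - (1 / 6) * (φ₁ q) ^ 3
      + ρ₃ q) p = 0 :=
    (pdx_congr (g := fun _ => (0 : ℝ)) eqd p).trans (pdx_zero_fun p)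
  rw [pdx_add ((((contDiff_pdx (contDiff_pdx hφ₂)).sub hφ₃).sub (hφ₁.mul hφ₂)).sub
        (contDiff_const.mul (hφ₁.pow 3))) hρ₃ p,
    pdx_sub (((contDiff_pdx (contDiff_pdx hφ₂)).sub hφ₃).sub (hφ₁.mul hφ₂))
      (contDiff_const.mul (hφ₁.pow 3)) p,
    pdx_sub ((contDiff_pdx (contDiff_pdx hφ₂)).sub hφ₃) (hφ₁.mul hφ₂) p,
    pdx_sub (contDiff_pdx (contDiff_pdx hφ₂)) hφ₃ p,
    pdx_const_mul (hφ₁.pow 3) (1 / 6) p, pdx_cube hφ₁ p, pdx_mul hφ₁ hφ₂ p,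
    st3, rel_φ₁ p, rel_φ₂ p, e_φ₁x p, e_φ₂x p] at ED
  -- mass equation
  have EA := eqa p
  rw [pdx_mul hρ₁ hu₂ p, pdx_mul hρ₂ hu₁ p, e_u₂x p, e_u₁x p, rel_u₂ p, rel_u₁ p] at EA
  -- first-order momentum equation
  have E2 := eq2 p
  rw [pdx_mul hρ₁ hθ₁ p, e_u₁t p, e_u₂x p, e_u₁x p, rel_u₁ p, e_θ₂x p,
    rel_θ₁ p, e_θ₁x p, e_φ₂x p, e_φ₁x p] at E2
  -- second-order momentum equation
  have EB := eqb p
  rw [pdx_mul hu₁ hu₂ p, pdx_mul hρ₁ hθ₂ p, pdx_mul hρ₂ hθ₁ p, e_u₂t p, e_u₁t p,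
    e_u₂x p, e_u₁x p, e_θ₂x p, e_θ₁x p, e_φ₂x p, e_φ₁x p, rel_u₁ p, rel_u₂ p,
    rel_θ₂ p, rel_θ₁ p] at EB
  -- expand the composite terms in the goal
  rw [pdx_mul hρ₁ hρ₂ p, e_u₁x p, pdx_mul hρ₁ hθ₁ p, rel_θ₁ p, e_θ₁x p, e_φ₁x p,
    pdx_const_mul (hφ₁.pow 3) (1 / 6) p, pdx_cube hφ₁ p, rel_φ₁ p, e_φ₁x p,
    pdx_mul hρ₁ hh₁ p, pdx_mul hρ₁ hB p, pdx_const_mul (hρ₁.pow 3) (1 / 2) p,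
    pdx_cube hρ₁ p]
  linear_combination A * EA + EB + ED - ρ₁ p * E2
    + (pdx ρ₃ p - 2 * pdx ρ₁ p * ρ₂ p - 3 * ρ₁ p * pdx ρ₂ p) * hsq
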